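/- Let x ∈ ℝ³, r₀ > 0, C > 0, let K ⊆ closedBall(x, r₀) be a compact set containing x, and let f : K → ℝ be a continuous nonnegative function with f(x) ≥ 4C²·r₀⁻². Then there exist a point y ∈ K and a radius s > 0 such that f(y) = C²·s⁻², the closed ball closedBall(y, s) is contained in the open ball of radius r₀ about x, and f(z) ≤ 4·C²·s⁻² = 4·f(y) for every z ∈ K ∩ closedBall(y, s). -/

import Mathlib

/-- Existence of a blow up point (equation (e:ti)): if `f ≥ 0` is continuous on a compact set
`K ⊆ closedBall x r₀` containing `x` with `f(x) ≥ 4C²r₀⁻²`, then there are `y ∈ K` and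
`s > 0` with `f(y) = C²s⁻²`, `closedBall y s ⊆ ball x r₀`, and
`f ≤ 4C²s⁻² = 4 f(y)` on `K ∩ closedBall y s`. -/
theorem stmt5 (x : EuclideanSpace ℝ (Fin 3)) (r₀ C : ℝ) (hr₀ : 0 < r₀) (hC : 0 < C)
    (K : Set (EuclideanSpace ℝ (Fin 3))) (hK : IsCompact K)
    (hKsub : K ⊆ Metric.closedBall x r₀) (hxK : x ∈ K)
    (f : EuclideanSpace ℝ (Fin 3) → ℝ) (hf : ContinuousOn f K)
    (hf0 : ∀ z ∈ K, 0 ≤ f z) (hfx : 4 * C ^ 2 * r₀⁻¹ ^ 2 ≤ f x) :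
    ∃ y ∈ K, ∃ s > 0, f y = C ^ 2 * s⁻¹ ^ 2 ∧
      Metric.closedBall y s ⊆ Metric.ball x r₀ ∧
      ∀ z ∈ K ∩ Metric.closedBall y s, f z ≤ 4 * C ^ 2 * s⁻¹ ^ 2 := by
  set F : EuclideanSpace ℝ (Fin 3) → ℝ := fun z => (r₀ - dist z x) ^ 2 * f z with hF
  have hFcont : ContinuousOn F K := by
    apply ContinuousOn.mul _ hf
    fun_prop
  obtain ⟨y, hyK, hymax⟩ := hK.exists_isMaxOn ⟨x, hxK⟩ hFcont
  have hFx : 4 * C ^ 2 ≤ F x := by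
    have h1 : F x = r₀ ^ 2 * f x := by simp [hF]
    have h2 : 4 * C ^ 2 = r₀ ^ 2 * (4 * C ^ 2 * r₀⁻¹ ^ 2) := by
      field_simp
    rw [h1, h2]
    exact mul_le_mul_of_nonneg_left hfx (sq_nonneg r₀)
  have hFy : 4 * C ^ 2 ≤ F y := hFx.trans (hymax hxK)
  have hFy' : 4 * C ^ 2 ≤ (r₀ - dist y x) ^ 2 * f y := hFy
  set d := r₀ - dist y x with hd
  clear_value d
  have hd0 : 0 ≤ d := by
    have := hKsub hyK
    simp only [Metric.mem_closedBall] at this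
    linarith
  have hfy0 : 0 ≤ f y := hf0 y hyK
  have hdpos : 0 < d := by
    rcases hd0.lt_or_eq with h | h
    · exact h
    · exfalso
      rw [← h] at hFy'
      nlinarith [mul_pos hC hC]
  have hfy : 0 < f y := by nlinarith [sq_nonneg C, sq_nonneg d]
  have hsq : (0:ℝ) < Real.sqrt (f y) := Real.sqrt_pos.2 hfy
  set s := C / Real.sqrt (f y) with hs
  clear_value s
  have hspos : 0 < s := by rw [hs]; exact div_pos hC hsq
  have hsqsq : Real.sqrt (f y) ^ 2 = f y := Real.sq_sqrt hfy.le
  have hfys : f y = C ^ 2 * s⁻¹ ^ 2 := by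
    rw [hs]
    field_simp
    exact hsqsq.symm
  have hs2 : s ^ 2 * f y = C ^ 2 := by
    rw [hs]; field_simp; exact hsqsq.symm
  have h2s : 2 * s ≤ d := by
    by_contra h
    push_neg at h
    have h1 : d ^ 2 * f y < (2 * s) ^ 2 * f y := by
      apply mul_lt_mul_of_pos_right _ hfy
      nlinarith
    nlinarith
  refine ⟨y, hyK, s, hspos, hfys, ?_, ?_⟩
  · intro z hz
    simp only [Metric.mem_closedBall] at hz
    simp only [Metric.mem_ball]
    have := dist_triangle z y x
    have : dist z x ≤ s + dist y x := by linarith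
    linarith
  · rintro z ⟨hzK, hzb⟩
    simp only [Metric.mem_closedBall] at hzb
    have htri : dist z x ≤ s + dist y x := by
      have := dist_triangle z y x; linarith
    have hlow : d - s ≤ r₀ - dist z x := by linarith
    have hFz : (r₀ - dist z x) ^ 2 * f z ≤ d ^ 2 * f y := by
      simpa [hF, ← hd] using hymax hzK
    have hfz0 : 0 ≤ f z := hf0 z hzK
    have hr : d / 2 ≤ r₀ - dist z x := by linarith
    have h1 : (d / 2) ^ 2 * f z ≤ (r₀ - dist z x) ^ 2 * f z := by
      apply mul_le_mul_of_nonneg_right _ hfz0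
      exact pow_le_pow_left₀ (by linarith) hr 2
    have hd2 : 0 < (d / 2) ^ 2 := by positivity
    have heq : (d / 2) ^ 2 * (4 * f y) = d ^ 2 * f y := by ring
    have h3 : (d / 2) ^ 2 * f z ≤ (d / 2) ^ 2 * (4 * f y) := by linarith
    have hgoal : f z ≤ 4 * f y := le_of_mul_le_mul_left h3 hd2
    calc f z ≤ 4 * f y := hgoal
    _ = 4 * C ^ 2 * s⁻¹ ^ 2 := by rw [hfys]; ring
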